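/- Let H be a Hilbert space and D(h)² = Σ_{k∈{0,1}ⁿ}(−1)^{|k|} T^k T*^k ≥ 0 the Szegő defect of a pure commuting n-tuple T of contractions (pure meaning ‖Tᵢ*ᵐ h‖ → 0 for all h and i; Szegő means D² ≥ 0). Then the map Π : H → H²_{D_T}(𝔻ⁿ) defined by (Πh)(z) = Σ_{k∈ℤ₊ⁿ} z^k D_T T*^k h is a well-defined isometry satisfying Π Tᵢ* = M_{zᵢ}* Π for i = 1, …, n, where D_T = (D²)^{1/2} and D_T = closure of its range. -/

import Mathlib

open ContinuousLinearMap

/-- `T^k = T₁^{k₁} ⋯ T_n^{k_n}` for a multi-index `k ∈ ℤ₊ⁿ`. -/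
def natPow {H : Type*} [NormedAddCommGroup H] [InnerProductSpace ℂ H]
    {n : ℕ} (T : Fin n → (H →L[ℂ] H)) (k : Fin n → ℕ) : H →L[ℂ] H :=
  (List.ofFn fun i => T i ^ k i).prod

/-- The Szegő defect `Σ_{k ∈ {0,1}^n} (−1)^{|k|} T^k T*^k` of a tuple. -/
noncomputable def szegoDefect {H : Type*} [NormedAddCommGroup H] [InnerProductSpace ℂ H]
    [CompleteSpace H] {n : ℕ} (T : Fin n → (H →L[ℂ] H)) : H →L[ℂ] H :=
  ∑ k : Fin n → Bool,
    ((-1 : ℂ) ^ (∑ i, if k i then 1 else 0 : ℕ)) •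
      (natPow T (fun i => if k i then 1 else 0) *
        ContinuousLinearMap.adjoint (natPow T (fun i => if k i then 1 else 0)))


open scoped ENNReal

section Infra
variable {H : Type*} [NormedAddCommGroup H] [InnerProductSpace ℂ H]
    {n : ℕ} {T : Fin n → (H →L[ℂ] H)}

theorem natPow_eq_noncommProd (hcomm : ∀ i j, T i * T j = T j * T i) (k : Fin n → ℕ) :
    natPow T k = Finset.univ.noncommProd (fun i => T i ^ k i)
      (fun i _ j _ _ => Commute.pow_pow (hcomm i j) _ _) := by
  rw [natPow, List.ofFn_eq_map]
  unfold Finset.noncommProd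
  exact (Multiset.noncommProd_coe ((List.finRange n).map fun i => T i ^ k i) _).symm

theorem natPow_add (hcomm : ∀ i j, T i * T j = T j * T i) (a b : Fin n → ℕ) :
    natPow T (a + b) = natPow T a * natPow T b := by
  rw [natPow_eq_noncommProd hcomm a, natPow_eq_noncommProd hcomm b,
    natPow_eq_noncommProd hcomm (a + b),
    ← Finset.noncommProd_mul_distrib (fun i => T i ^ a i) (fun i => T i ^ b i)
      (fun i _ j _ _ => Commute.pow_pow (hcomm i j) _ _)
      (fun i _ j _ _ => Commute.pow_pow (hcomm i j) _ _)
      (fun i _ j _ _ => Commute.pow_pow (hcomm i j) _ _)]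
  exact Finset.noncommProd_congr rfl (fun i _ => by simp [pow_add]) _

theorem natPow_zero : natPow T (fun _ => 0) = 1 := by
  simp [natPow]

theorem natPow_single (hcomm : ∀ i j, T i * T j = T j * T i) (i : Fin n) (m : ℕ) :
    natPow T (fun j => if j = i then m else 0) = T i ^ m := by
  rw [natPow_eq_noncommProd hcomm]
  rw [← Finset.mul_noncommProd_erase Finset.univ (Finset.mem_univ i)
    (fun j => T j ^ (if j = i then m else 0)) (fun j _ l _ _ => Commute.pow_pow (hcomm j l) _ _)]
  have h1 : ((Finset.univ.erase i).noncommProd (fun j => T j ^ (if j = i then m else 0))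
      (fun j hj l hl hjl => Commute.pow_pow (hcomm j l) _ _)) = 1 := by
    refine Finset.noncommProd_induction _ _ _ (fun x : H →L[ℂ] H => x = 1)
      (fun a b ha hb => by rw [ha, hb, mul_one]) rfl (fun j hj => ?_)
    rw [if_neg (Finset.ne_of_mem_erase hj), pow_zero]
  rw [h1, mul_one, if_pos rfl]

theorem norm_pow_le_one {A : H →L[ℂ] H} (hA : ‖A‖ ≤ 1) (m : ℕ) : ‖A ^ m‖ ≤ 1 := by
  induction m with
  | zero =>
    rw [pow_zero, ContinuousLinearMap.one_def]
    exact ContinuousLinearMap.norm_id_le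
  | succ m ih =>
    rw [pow_succ]
    calc ‖A ^ m * A‖ ≤ ‖A ^ m‖ * ‖A‖ := norm_mul_le _ _
      _ ≤ 1 * 1 := mul_le_mul ih hA (norm_nonneg _) zero_le_one
      _ = 1 := mul_one 1

theorem norm_natPow_le_one (hcontr : ∀ i, ‖T i‖ ≤ 1) (k : Fin n → ℕ) :
    ‖natPow T k‖ ≤ 1 := by
  have aux : ∀ l : List (H →L[ℂ] H), (∀ x ∈ l, ‖x‖ ≤ 1) → ‖l.prod‖ ≤ 1 := by
    intro l
    induction l with
    | nil =>
      intro _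
      rw [List.prod_nil, ContinuousLinearMap.one_def]
      exact ContinuousLinearMap.norm_id_le
    | cons a t iht =>
      intro hx
      rw [List.prod_cons]
      calc ‖a * t.prod‖ ≤ ‖a‖ * ‖t.prod‖ := norm_mul_le _ _
        _ ≤ 1 * 1 := mul_le_mul (hx a List.mem_cons_self)
            (iht fun x hxt => hx x (List.mem_cons_of_mem a hxt)) (norm_nonneg _) zero_le_one
        _ = 1 := mul_one 1
  refine aux _ fun x hx => ?_
  obtain ⟨i, hi⟩ := List.mem_ofFn.1 hx
  rw [← hi]
  exact norm_pow_le_one (hcontr i) _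

theorem norm_adjoint_le_one [CompleteSpace H] {A : H →L[ℂ] H} (hA : ‖A‖ ≤ 1) :
    ‖ContinuousLinearMap.adjoint A‖ ≤ 1 := by
  rw [← star_eq_adjoint, norm_star]
  exact hA

end Infra



lemma telescope_box (m : ℕ) : ∀ (n : ℕ) (f : (Fin n → ℕ) → ℝ),
    (∑ k : Fin n → Fin m, ∑ ε : Fin n → Bool,
      (∏ i, if ε i then (-1:ℝ) else 1) * f (fun i => (k i : ℕ) + (if ε i then 1 else 0)))
    = ∑ ε : Fin n → Bool, (∏ i, if ε i then (-1:ℝ) else 1) * f (fun i => if ε i then m else 0) := by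
  intro n
  induction n with
  | zero =>
    intro f
    simp only [Finset.univ_unique, Finset.sum_singleton]
    congr 1
    exact congrArg f (funext fun i => i.elim0)
  | succ n ih =>
    intro f
    have hK : ∀ (G : (Fin (n+1) → Fin m) → ℝ),
        (∑ k : Fin (n+1) → Fin m, G k) = ∑ a : Fin m, ∑ k : Fin n → Fin m, G (Fin.cons a k) := by
      intro G
      calc (∑ k : Fin (n+1) → Fin m, G k)
          = ∑ p : Fin m × (Fin n → Fin m), G (Fin.cons p.1 p.2) :=
            (Fintype.sum_equiv (Fin.consEquiv fun _ => Fin m)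
              (fun p => G (Fin.cons p.1 p.2)) G (fun p => rfl)).symm
        _ = ∑ a : Fin m, ∑ k : Fin n → Fin m, G (Fin.cons a k) :=
            Fintype.sum_prod_type (f := fun p : Fin m × (Fin n → Fin m) => G (Fin.cons p.1 p.2))
    have hB : ∀ (G : (Fin (n+1) → Bool) → ℝ),
        (∑ ε : Fin (n+1) → Bool, G ε) = ∑ b : Bool, ∑ ε : Fin n → Bool, G (Fin.cons b ε) := by
      intro G
      calc (∑ ε : Fin (n+1) → Bool, G ε)
          = ∑ p : Bool × (Fin n → Bool), G (Fin.cons p.1 p.2) :=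
            (Fintype.sum_equiv (Fin.consEquiv fun _ => Bool)
              (fun p => G (Fin.cons p.1 p.2)) G (fun p => rfl)).symm
        _ = ∑ b : Bool, ∑ ε : Fin n → Bool, G (Fin.cons b ε) :=
            Fintype.sum_prod_type (f := fun p : Bool × (Fin n → Bool) => G (Fin.cons p.1 p.2))
    set u : ℕ → ℝ := fun t => ∑ ε : Fin n → Bool,
      (∏ i, if ε i then (-1:ℝ) else 1) * f (Fin.cons t (fun i => if ε i then m else 0)) with hu
    have hsgn : ∀ (b : Bool) (ε : Fin n → Bool),
        (∏ i : Fin (n+1), if (Fin.cons b ε : Fin (n+1) → Bool) i then (-1:ℝ) else 1)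
        = (if b then (-1:ℝ) else 1) * ∏ i, if ε i then (-1:ℝ) else 1 := by
      intro b ε
      rw [Fin.prod_univ_succ]
      simp
    have harg : ∀ (a : Fin m) (k : Fin n → Fin m) (b : Bool) (ε : Fin n → Bool),
        (fun i => ((Fin.cons a k : Fin (n+1) → Fin m) i : ℕ)
            + (if (Fin.cons b ε : Fin (n+1) → Bool) i then 1 else 0))
        = Fin.cons ((a : ℕ) + (if b then 1 else 0))
            (fun i => (k i : ℕ) + (if ε i then 1 else 0)) := by
      intro a k b ε
      funext i
      refine Fin.cases ?_ (fun j => ?_) i <;> simp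
    have harg2 : ∀ (b : Bool) (ε : Fin n → Bool),
        (fun i => if (Fin.cons b ε : Fin (n+1) → Bool) i then m else 0)
        = Fin.cons (if b then m else 0) (fun i => if ε i then m else 0) := by
      intro b ε
      funext i
      refine Fin.cases ?_ (fun j => ?_) i <;> simp
    calc (∑ k : Fin (n+1) → Fin m, ∑ ε : Fin (n+1) → Bool,
            (∏ i, if ε i then (-1:ℝ) else 1) * f (fun i => (k i : ℕ) + (if ε i then 1 else 0)))
        = ∑ a : Fin m, ∑ k : Fin n → Fin m, ∑ b : Bool, ∑ ε : Fin n → Bool,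
            (if b then (-1:ℝ) else 1) * ((∏ i, if ε i then (-1:ℝ) else 1) *
              f (Fin.cons ((a:ℕ) + (if b then 1 else 0))
                  (fun i => (k i : ℕ) + (if ε i then 1 else 0)))) := by
          rw [hK]
          refine Finset.sum_congr rfl fun a _ => Finset.sum_congr rfl fun k _ => ?_
          rw [hB]
          refine Finset.sum_congr rfl fun b _ => Finset.sum_congr rfl fun ε _ => ?_
          rw [hsgn, harg, mul_assoc]
      _ = ∑ a : Fin m, ∑ b : Bool, (if b then (-1:ℝ) else 1) *
            (∑ k : Fin n → Fin m, ∑ ε : Fin n → Bool,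
              (∏ i, if ε i then (-1:ℝ) else 1) *
              f (Fin.cons ((a:ℕ) + (if b then 1 else 0))
                  (fun i => (k i : ℕ) + (if ε i then 1 else 0)))) := by
          refine Finset.sum_congr rfl fun a _ => ?_
          rw [Finset.sum_comm]
          refine Finset.sum_congr rfl fun b _ => ?_
          rw [Finset.mul_sum]
          refine Finset.sum_congr rfl fun k _ => ?_
          rw [Finset.mul_sum]
      _ = ∑ a : Fin m, ∑ b : Bool, (if b then (-1:ℝ) else 1) *
            u ((a:ℕ) + (if b then 1 else 0)) := by
          refine Finset.sum_congr rfl fun a _ => Finset.sum_congr rfl fun b _ => ?_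
          rw [ih (fun v => f (Fin.cons ((a:ℕ) + (if b then 1 else 0)) v))]
      _ = ∑ a : Fin m, (u (a:ℕ) - u ((a:ℕ) + 1)) := by
          refine Finset.sum_congr rfl fun a _ => ?_
          simp [Fintype.sum_bool]
          ring
      _ = ∑ a ∈ Finset.range m, (u a - u (a + 1)) := by
          rw [Fin.sum_univ_eq_sum_range (fun a => u a - u (a+1)) m]
      _ = u 0 - u m := Finset.sum_range_sub' u m
      _ = ∑ ε : Fin (n+1) → Bool,
            (∏ i, if ε i then (-1:ℝ) else 1) * f (fun i => if ε i then m else 0) := by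
          rw [hB (fun ε => (∏ i, if ε i then (-1:ℝ) else 1) * f (fun i => if ε i then m else 0))]
          have : ∀ b ε, (∏ i : Fin (n+1), if (Fin.cons b ε : Fin (n+1) → Bool) i then (-1:ℝ) else 1)
              * f (fun i => if (Fin.cons b ε : Fin (n+1) → Bool) i then m else 0)
              = (if b then (-1:ℝ) else 1) * ((∏ i, if ε i then (-1:ℝ) else 1) *
                  f (Fin.cons (if b then m else 0) (fun i => if ε i then m else 0))) := by
            intro b ε; rw [hsgn, harg2, mul_assoc]
          rw [Finset.sum_congr rfl fun b _ => Finset.sum_congr rfl fun ε _ => this b ε]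
          simp [Fintype.sum_bool, hu]
          ring

section Analysis
variable {H : Type*} [NormedAddCommGroup H] [InnerProductSpace ℂ H] [CompleteSpace H]
    {n : ℕ} {T : Fin n → (H →L[ℂ] H)}

noncomputable def szegoDefect' {H : Type*} [NormedAddCommGroup H] [InnerProductSpace ℂ H]
    [CompleteSpace H] {n : ℕ} (T : Fin n → (H →L[ℂ] H)) : H →L[ℂ] H :=
  ∑ k : Fin n → Bool,
    ((-1 : ℂ) ^ (∑ i, if k i then 1 else 0 : ℕ)) •
      (natPow T (fun i => if k i then 1 else 0) *
        ContinuousLinearMap.adjoint (natPow T (fun i => if k i then 1 else 0)))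

lemma sgn_prod_eq (ε : Fin n → Bool) :
    (∏ i, if ε i then (-1:ℝ) else 1) = (-1:ℝ) ^ (∑ i, if ε i then 1 else 0 : ℕ) := by
  rw [← Finset.prod_pow_eq_pow_sum]
  exact Finset.prod_congr rfl fun i _ => by cases h : ε i <;> simp [h]

lemma norm_DT_sq {DT : H →L[ℂ] H} (hDT : DT.IsPositive) (hDT2 : DT ^ 2 = szegoDefect' T)
    (x : H) :
    ‖DT x‖ ^ 2 = ∑ ε : Fin n → Bool, (∏ i, if ε i then (-1:ℝ) else 1) *
      ‖ContinuousLinearMap.adjoint (natPow T (fun i => if ε i then 1 else 0)) x‖ ^ 2 := by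
  have hsa : ContinuousLinearMap.adjoint DT = DT := by
    rw [← ContinuousLinearMap.star_eq_adjoint]; exact hDT.isSelfAdjoint
  have h1 : (inner ℂ (DT x) (DT x) : ℂ) = inner ℂ ((szegoDefect' T) x) x := by
    rw [← hDT2]
    calc (inner ℂ (DT x) (DT x) : ℂ)
        = inner ℂ (ContinuousLinearMap.adjoint DT (DT x)) x :=
          (ContinuousLinearMap.adjoint_inner_left DT x (DT x)).symm
      _ = inner ℂ ((DT ^ 2) x) x := by rw [hsa, pow_two, ContinuousLinearMap.mul_apply]
  have h2 : (inner ℂ ((szegoDefect' T) x) x : ℂ)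
      = ∑ ε : Fin n → Bool, ((-1:ℂ) ^ (∑ i, if ε i then 1 else 0 : ℕ)) *
          ((‖ContinuousLinearMap.adjoint (natPow T (fun i => if ε i then 1 else 0)) x‖ : ℂ)) ^ 2 := by
    rw [szegoDefect', ContinuousLinearMap.sum_apply, sum_inner]
    refine Finset.sum_congr rfl fun ε _ => ?_
    set P := natPow T (fun i => if ε i then 1 else 0)
    have : ((((-1 : ℂ) ^ (∑ i, if ε i then 1 else 0 : ℕ)) •
        (P * ContinuousLinearMap.adjoint P)) x)
        = ((-1 : ℂ) ^ (∑ i, if ε i then 1 else 0 : ℕ)) •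
          (P (ContinuousLinearMap.adjoint P x)) := by
      simp [ContinuousLinearMap.mul_apply]
    rw [this, inner_smul_left]
    have hc : (starRingEnd ℂ) ((-1 : ℂ) ^ (∑ i, if ε i then 1 else 0 : ℕ))
        = (-1 : ℂ) ^ (∑ i, if ε i then 1 else 0 : ℕ) := by
      rw [map_pow, map_neg, map_one]
    rw [hc]
    congr 1
    calc (inner ℂ (P (ContinuousLinearMap.adjoint P x)) x : ℂ)
        = inner ℂ (ContinuousLinearMap.adjoint (ContinuousLinearMap.adjoint P)
            (ContinuousLinearMap.adjoint P x)) x := by rw [ContinuousLinearMap.adjoint_adjoint]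
      _ = inner ℂ (ContinuousLinearMap.adjoint P x) (ContinuousLinearMap.adjoint P x) :=
          ContinuousLinearMap.adjoint_inner_left _ _ _
      _ = ((‖ContinuousLinearMap.adjoint P x‖ : ℂ)) ^ 2 := inner_self_eq_norm_sq_to_K _
  have h0 : ((‖DT x‖ ^ 2 : ℝ) : ℂ) = inner ℂ (DT x) (DT x) := by
    rw [inner_self_eq_norm_sq_to_K]
    norm_cast
  have h4 : ((‖DT x‖ ^ 2 : ℝ) : ℂ) = ((∑ ε : Fin n → Bool, (∏ i, if ε i then (-1:ℝ) else 1) *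
      ‖ContinuousLinearMap.adjoint (natPow T (fun i => if ε i then 1 else 0)) x‖ ^ 2 : ℝ) : ℂ) := by
    rw [h0, h1, h2, Complex.ofReal_sum]
    refine Finset.sum_congr rfl fun ε _ => ?_
    rw [sgn_prod_eq]
    push_cast
    ring
  exact_mod_cast h4

end Analysis

section Main
variable {H : Type*} [NormedAddCommGroup H] [InnerProductSpace ℂ H] [CompleteSpace H]
    {n : ℕ} {T : Fin n → (H →L[ℂ] H)}

open Filter in
theorem hasSum_norm_sq (hcomm : ∀ i j, T i * T j = T j * T i)
    (hcontr : ∀ i, ‖T i‖ ≤ 1)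
    (hpure : ∀ (i : Fin n) (h : H),
      Filter.Tendsto (fun m : ℕ => ‖((ContinuousLinearMap.adjoint (T i)) ^ m) h‖)
        Filter.atTop (nhds 0))
    {DT : H →L[ℂ] H} (hDT : DT.IsPositive) (hDT2 : DT ^ 2 = szegoDefect' T) (h : H) :
    HasSum (fun k : Fin n → ℕ =>
      ‖DT (ContinuousLinearMap.adjoint (natPow T k) h)‖ ^ 2) (‖h‖ ^ 2) := by
  classical
  set A : (Fin n → ℕ) → (H →L[ℂ] H) := fun k => ContinuousLinearMap.adjoint (natPow T k)
    with hA
  set f : (Fin n → ℕ) → ℝ := fun k => ‖A k h‖ ^ 2 with hf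
  set g : (Fin n → ℕ) → ℝ := fun k => ‖DT (A k h)‖ ^ 2 with hgdef
  have hg0 : ∀ k, 0 ≤ g k := fun k => by positivity
  have hAadd : ∀ (a b : Fin n → ℕ) (y : H), A (a + b) y = A b (A a y) := by
    intro a b y
    have : natPow T (a + b) = natPow T a * natPow T b := natPow_add hcomm a b
    rw [hA]
    simp only []
    rw [this, ← ContinuousLinearMap.star_eq_adjoint, star_mul,
      ContinuousLinearMap.mul_apply]
    rfl
  have hgf : ∀ k, g k = ∑ ε : Fin n → Bool,
      (∏ i, if ε i then (-1:ℝ) else 1) * f (k + fun i => if ε i then 1 else 0) := by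
    intro k
    rw [hgdef]
    simp only []
    rw [norm_DT_sq hDT hDT2 (A k h)]
    refine Finset.sum_congr rfl fun ε _ => ?_
    congr 1
    rw [hf]
    simp only []
    congr 1
    exact congrArg norm (hAadd k _ h).symm
  have hbox : ∀ m : ℕ, (∑ k : Fin n → Fin m, g (fun i => (k i : ℕ)))
      = ∑ ε : Fin n → Bool, (∏ i, if ε i then (-1:ℝ) else 1) *
          f (fun i => if ε i then m else 0) := by
    intro m
    rw [← telescope_box m n f]
    exact Finset.sum_congr rfl fun k _ => hgf _
  have hf0 : f (fun _ => 0) = ‖h‖ ^ 2 := by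
    rw [hf]
    simp only []
    rw [hA]
    simp only []
    rw [natPow_zero, ← ContinuousLinearMap.star_eq_adjoint, star_one,
      ContinuousLinearMap.one_apply]
  have hterm : ∀ ε : Fin n → Bool,
      Filter.Tendsto (fun m : ℕ => (∏ i, if ε i then (-1:ℝ) else 1) *
          f (fun i => if ε i then m else 0)) Filter.atTop
        (nhds (if ε = (fun _ => false) then ‖h‖ ^ 2 else 0)) := by
    intro ε
    by_cases hε : ε = fun _ => false
    · rw [if_pos hε]
      subst hε
      simp only [Bool.false_eq_true, if_false, Finset.prod_const_one, one_mul]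
      rw [show (fun _ : Fin n => (0:ℕ)) = (fun _ : Fin n => 0) from rfl] at hf0
      rw [show (fun m : ℕ => f fun i : Fin n => (0:ℕ)) = fun _ : ℕ => f (fun _ : Fin n => 0) from rfl, hf0]
      exact tendsto_const_nhds
    · rw [if_neg hε]
      obtain ⟨i, hi⟩ : ∃ i, ε i = true := by
        by_contra hc
        push_neg at hc
        exact hε (funext fun i => by simpa using hc i)
      have hb : ∀ m : ℕ, f (fun j => if ε j then m else 0)
          ≤ ‖((ContinuousLinearMap.adjoint (T i)) ^ m) h‖ ^ 2 := by
        intro m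
        set y : H := ((ContinuousLinearMap.adjoint (T i)) ^ m) h with hy
        set R : H →L[ℂ] H := A (fun j => if ε j ∧ j ≠ i then m else 0) with hR
        have hdecomp : (fun j => if ε j then m else 0)
            = (fun j => if j = i then m else 0) + fun j => if ε j ∧ j ≠ i then m else 0 := by
          funext j
          by_cases hj : j = i
          · subst hj; simp [hi]
          · by_cases hej : ε j <;> simp [hj, hej]
        have hsplit : A (fun j => if ε j then m else 0) h = R y := by
          rw [hdecomp, hAadd, hy, hR]
          congr 1
          rw [hA]
          simp only []
          rw [natPow_single hcomm i m, ← ContinuousLinearMap.star_eq_adjoint, star_pow,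
            ContinuousLinearMap.star_eq_adjoint]
        rw [hf]
        simp only []
        rw [hsplit]
        have hnorm : ‖R y‖ ≤ ‖y‖ := by
          calc ‖R y‖ ≤ ‖R‖ * ‖y‖ := ContinuousLinearMap.le_opNorm _ _
            _ ≤ 1 * ‖y‖ := mul_le_mul_of_nonneg_right
                  (by rw [hR, hA]; exact norm_adjoint_le_one (norm_natPow_le_one hcontr _))
                  (norm_nonneg _)
            _ = ‖y‖ := one_mul _
        exact pow_le_pow_left₀ (norm_nonneg _) hnorm 2
      have hsq : Filter.Tendsto
          (fun m : ℕ => ‖((ContinuousLinearMap.adjoint (T i)) ^ m) h‖ ^ 2)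
          Filter.atTop (nhds 0) := by
        simpa using (hpure i h).pow 2
      have hf_tend : Filter.Tendsto (fun m : ℕ => f (fun j => if ε j then m else 0))
          Filter.atTop (nhds 0) :=
        squeeze_zero (fun m => by rw [hf]; positivity) hb hsq
      simpa using hf_tend.const_mul (∏ i, if ε i then (-1:ℝ) else 1)
  have hboxlim : Filter.Tendsto (fun m : ℕ => ∑ k : Fin n → Fin m, g (fun i => (k i : ℕ)))
      Filter.atTop (nhds (‖h‖ ^ 2)) := by
    have h1 := tendsto_finset_sum (Finset.univ : Finset (Fin n → Bool)) (fun ε _ => hterm ε)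
    have h2 : (∑ ε : Fin n → Bool, if ε = (fun _ => false) then ‖h‖ ^ 2 else 0) = ‖h‖ ^ 2 := by
      rw [Finset.sum_ite_eq' Finset.univ (fun _ => false) (fun _ => ‖h‖ ^ 2),
        if_pos (Finset.mem_univ _)]
    rw [h2] at h1
    rw [show (fun m : ℕ => ∑ k : Fin n → Fin m, g (fun i => (k i : ℕ)))
      = fun m : ℕ => ∑ ε : Fin n → Bool, (∏ i, if ε i then (-1:ℝ) else 1) *
          f (fun i => if ε i then m else 0) from funext hbox]
    exact h1
  set B : ℕ → Finset (Fin n → ℕ) := fun m =>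
    Finset.image (fun k : Fin n → Fin m => fun i => (k i : ℕ)) Finset.univ with hB
  have hmemB : ∀ (m : ℕ) (x : Fin n → ℕ), x ∈ B m ↔ ∀ i, x i < m := by
    intro m x
    constructor
    · intro hx i
      rw [hB] at hx
      simp only [Finset.mem_image] at hx
      obtain ⟨k, _, rfl⟩ := hx
      exact (k i).isLt
    · intro hx
      rw [hB]
      simp only [Finset.mem_image]
      exact ⟨fun i => ⟨x i, hx i⟩, Finset.mem_univ _, rfl⟩
  have hBsum : ∀ m, (∑ k ∈ B m, g k) = ∑ k : Fin n → Fin m, g (fun i => (k i : ℕ)) := by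
    intro m
    rw [hB]
    refine Finset.sum_image ?_
    intro k1 _ k2 _ hk
    funext i
    exact Fin.ext (congrFun hk i)
  have hBlim : Filter.Tendsto (fun m : ℕ => ∑ k ∈ B m, g k) Filter.atTop
      (nhds (‖h‖ ^ 2)) := by
    rw [show (fun m : ℕ => ∑ k ∈ B m, g k)
      = fun m : ℕ => ∑ k : Fin n → Fin m, g (fun i => (k i : ℕ)) from funext hBsum]
    exact hboxlim
  have hmono : Monotone fun m : ℕ => ∑ k ∈ B m, g k := by
    intro m m' hmm
    refine Finset.sum_le_sum_of_subset_of_nonneg ?_ (fun k _ _ => hg0 k)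
    intro x hx
    rw [hmemB] at hx ⊢
    exact fun i => lt_of_lt_of_le (hx i) hmm
  have hboundB : ∀ m, (∑ k ∈ B m, g k) ≤ ‖h‖ ^ 2 := fun m => hmono.ge_of_tendsto hBlim m
  have hfinset : ∀ s : Finset (Fin n → ℕ), (∑ k ∈ s, g k) ≤ ‖h‖ ^ 2 := by
    intro s
    set m := (s.sup fun x => Finset.univ.sup x) + 1 with hm
    have hsub : s ⊆ B m := by
      intro x hx
      rw [hmemB]
      intro i
      have h1 : x i ≤ Finset.univ.sup x := Finset.le_sup (Finset.mem_univ i)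
      have h2 : Finset.univ.sup x ≤ s.sup fun y => Finset.univ.sup y := Finset.le_sup hx
      omega
    calc (∑ k ∈ s, g k) ≤ ∑ k ∈ B m, g k :=
          Finset.sum_le_sum_of_subset_of_nonneg hsub (fun k _ _ => hg0 k)
      _ ≤ ‖h‖ ^ 2 := hboundB m
  have hsummable : Summable g := summable_of_sum_le (fun k => hg0 k) hfinset
  have htsum : (∑' k, g k) = ‖h‖ ^ 2 := by
    refine le_antisymm (Summable.tsum_le_of_sum_le hsummable hfinset) ?_
    refine le_of_tendsto hBlim (Filter.Eventually.of_forall fun m => ?_)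
    exact Summable.sum_le_tsum (B m) (fun k _ => hg0 k) hsummable
  exact htsum ▸ hsummable.hasSum

end Main


/-- Dilation of a pure Szegő `n`-tuple: if `T = (T₁, …, Tₙ)` is a commuting tuple of
contractions with Szegő positivity, each `Tᵢ*` pure, and `D_T ≥ 0` is the square root
of the Szegő defect, then the map `Π h = (D_T T*^k h)_{k ∈ ℤ₊ⁿ}` is a well-defined
linear isometry of `H` into the Hardy space `H²(𝔻ⁿ)` (realized as `ℓ²(ℤ₊ⁿ)`) valued
in the defect space, and in coordinates it satisfies `Π Tᵢ* = M_{zᵢ}* Π`, i.e.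
`(Π (Tᵢ* h))(k) = (Π h)(k + eᵢ)`. -/
theorem canonical_dilation_of_pure_szego_tuple
    {H : Type*} [NormedAddCommGroup H] [InnerProductSpace ℂ H] [CompleteSpace H]
    {n : ℕ} (T : Fin n → (H →L[ℂ] H))
    (hcomm : ∀ i j, T i * T j = T j * T i)
    (hcontr : ∀ i, ‖T i‖ ≤ 1)
    (hpure : ∀ (i : Fin n) (h : H),
      Filter.Tendsto (fun m : ℕ => ‖((ContinuousLinearMap.adjoint (T i)) ^ m) h‖)
        Filter.atTop (nhds 0))
    (hszego : (szegoDefect T).IsPositive)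
    (DT : H →L[ℂ] H) (hDT : DT.IsPositive) (hDT2 : DT ^ 2 = szegoDefect T) :
    ∃ Dil : H →ₗᵢ[ℂ] lp (fun _ : Fin n → ℕ => H) 2,
      (∀ (h : H) (k : Fin n → ℕ),
        (Dil h : ∀ _ : Fin n → ℕ, H) k = DT (ContinuousLinearMap.adjoint (natPow T k) h)) ∧
      (∀ (i : Fin n) (h : H) (k : Fin n → ℕ),
        (Dil (ContinuousLinearMap.adjoint (T i) h) : ∀ _ : Fin n → ℕ, H) k =
          (Dil h : ∀ _ : Fin n → ℕ, H) (k + fun j => if j = i then 1 else 0)) := by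
  classical
  have hDT2' : DT ^ 2 = szegoDefect' T := hDT2
  have key : ∀ h : H, HasSum
      (fun k : Fin n → ℕ => ‖DT (ContinuousLinearMap.adjoint (natPow T k) h)‖ ^ 2)
      (‖h‖ ^ 2) := fun h => hasSum_norm_sq hcomm hcontr hpure hDT hDT2' h
  have hp : (0:ℝ) < (2 : ℝ≥0∞).toReal := by norm_num
  have htoReal : ((2 : ℝ≥0∞).toReal) = ((2:ℕ) : ℝ) := by norm_num
  have hmem : ∀ h : H, Memℓp (fun k : Fin n → ℕ =>
      DT (ContinuousLinearMap.adjoint (natPow T k) h)) 2 := by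
    intro h
    apply memℓp_gen
    exact (key h).summable.congr fun k => by
      rw [htoReal, Real.rpow_natCast]
  set Pi0 : H → lp (fun _ : Fin n → ℕ => H) 2 := fun h =>
    ⟨fun k => DT (ContinuousLinearMap.adjoint (natPow T k) h), hmem h⟩ with hPi0
  have hadd : ∀ x y : H, Pi0 (x + y) = Pi0 x + Pi0 y := by
    intro x y
    apply lp.ext
    rw [lp.coeFn_add]
    funext k
    simp [hPi0, map_add]
  have hsmul : ∀ (c : ℂ) (x : H), Pi0 (c • x) = c • Pi0 x := by
    intro c x
    apply lp.ext
    rw [lp.coeFn_smul]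
    funext k
    simp [hPi0, map_smul]
  have hnorm : ∀ h : H, ‖Pi0 h‖ = ‖h‖ := by
    intro h
    have h2 : ‖Pi0 h‖ ^ (2:ℕ) = ‖h‖ ^ 2 := by
      have h1 := lp.norm_rpow_eq_tsum hp (Pi0 h)
      rw [htoReal] at h1
      simp only [Real.rpow_natCast] at h1
      rw [h1]
      exact (key h).tsum_eq
    calc ‖Pi0 h‖ = Real.sqrt (‖Pi0 h‖ ^ 2) := (Real.sqrt_sq (norm_nonneg _)).symm
      _ = Real.sqrt (‖h‖ ^ 2) := by rw [h2]
      _ = ‖h‖ := Real.sqrt_sq (norm_nonneg _)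
  refine ⟨⟨⟨⟨Pi0, hadd⟩, hsmul⟩, hnorm⟩, fun h k => rfl, ?_⟩
  intro i h k
  show DT (ContinuousLinearMap.adjoint (natPow T k) (ContinuousLinearMap.adjoint (T i) h))
      = DT (ContinuousLinearMap.adjoint
          (natPow T (k + fun j => if j = i then 1 else 0)) h)
  congr 1
  have hnp : natPow T (k + fun j => if j = i then 1 else 0) = T i * natPow T k := by
    rw [show (k + fun j => if j = i then 1 else 0)
        = (fun j => if j = i then 1 else 0) + k from add_comm _ _,
      natPow_add hcomm, natPow_single hcomm i 1, pow_one]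
  have hadj : ContinuousLinearMap.adjoint (T i * natPow T k)
      = ContinuousLinearMap.adjoint (natPow T k) * ContinuousLinearMap.adjoint (T i) := by
    rw [← ContinuousLinearMap.star_eq_adjoint, star_mul, ContinuousLinearMap.star_eq_adjoint,
      ContinuousLinearMap.star_eq_adjoint]
  rw [hnp, hadj, ContinuousLinearMap.mul_apply]
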